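/- Let (X, B, μ) be a probability space, U an invertible measure-preserving transformation, and w an ergodic A₁ weight on X. Then for every f ∈ L¹_w(X) and λ > 0, ∫_{{x : M̃f(x) > λ}} w(x) dμ(x) ≤ (C/λ) ∫_X |f(x)| w(x) dμ(x), where M̃ is the maximal ergodic operator and C depends only on the ergodic A₁ constant of w. -/

import Mathlib

open scoped ENNReal BigOperators
open MeasureTheory


lemma sum_biUnion_le' {α ι : Type*} [DecidableEq α] (S : Finset ι) (t : ι → Finset α)
    (f : α → ℝ≥0∞) : ∑ x ∈ S.biUnion t, f x ≤ ∑ s ∈ S, ∑ x ∈ t s, f x := by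
  classical
  induction S using Finset.induction with
  | empty => simp
  | @insert a S h ih =>
    rw [Finset.biUnion_insert, Finset.sum_insert h]
    calc ∑ x ∈ t a ∪ S.biUnion t, f x
        ≤ ∑ x ∈ t a ∪ S.biUnion t, f x + ∑ x ∈ t a ∩ S.biUnion t, f x := le_self_add
      _ = ∑ x ∈ t a, f x + ∑ x ∈ S.biUnion t, f x := Finset.sum_union_inter
      _ ≤ ∑ x ∈ t a, f x + ∑ s ∈ S, ∑ x ∈ t s, f x := by gcongr

lemma vitaliZ : ∀ (E : Finset ℤ) (J : ℤ → ℕ),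
    ∃ S : Finset ℤ, S ⊆ E ∧
      (∀ s ∈ S, ∀ t ∈ S, s ≠ t →
        Disjoint (Finset.Icc (s - J s) (s + J s)) (Finset.Icc (t - J t) (t + J t))) ∧
      ∀ n ∈ E, ∃ s ∈ S, n ∈ Finset.Icc (s - 3 * (J s : ℤ)) (s + 3 * (J s : ℤ)) := by
  intro E
  induction E using Finset.strongInductionOn with
  | _ E ih =>
    intro J
    rcases E.eq_empty_or_nonempty with rfl | hne
    · exact ⟨∅, by simp⟩
    obtain ⟨s, hsE, hmax⟩ := E.exists_max_image J hne
    set E' := E.filter (fun n =>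
      Disjoint (Finset.Icc (n - J n) (n + J n)) (Finset.Icc (s - J s) (s + J s))) with hE'
    have hsI : s ∈ Finset.Icc (s - (J s : ℤ)) (s + J s) := Finset.mem_Icc.2 (by omega)
    have hsnot : s ∉ E' := by
      simp only [hE', Finset.mem_filter, not_and]
      intro _ hd
      exact (Finset.disjoint_left.1 hd hsI) hsI
    have hss : E' ⊂ E := Finset.ssubset_iff_of_subset (Finset.filter_subset _ _) |>.2 ⟨s, hsE, hsnot⟩
    obtain ⟨S', hS'sub, hdisj, hcov⟩ := ih E' hss J
    refine ⟨insert s S', ?_, ?_, ?_⟩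
    · exact Finset.insert_subset hsE (hS'sub.trans (Finset.filter_subset _ _))
    · intro a ha b hb hab
      rcases Finset.mem_insert.1 ha with ha' | ha' <;> rcases Finset.mem_insert.1 hb with hb' | hb'
      · exact absurd (ha'.trans hb'.symm) hab
      · subst ha'; exact ((Finset.mem_filter.1 (hS'sub hb')).2).symm
      · subst hb'; exact (Finset.mem_filter.1 (hS'sub ha')).2
      · exact hdisj a ha' b hb' hab
    · intro n hn
      by_cases hn' : n ∈ E'
      · obtain ⟨t, htS, hnt⟩ := hcov n hn'
        exact ⟨t, Finset.mem_insert_of_mem htS, hnt⟩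
      · refine ⟨s, Finset.mem_insert_self _ _, ?_⟩
        have hnd : ¬ Disjoint (Finset.Icc (n - J n) (n + J n))
            (Finset.Icc (s - J s) (s + J s)) := by
          intro hd
          exact hn' (Finset.mem_filter.2 ⟨hn, hd⟩)
        obtain ⟨p, hp1, hp2⟩ := Finset.not_disjoint_iff.1 hnd
        simp only [Finset.mem_Icc] at hp1 hp2 ⊢
        have hJ : (J n : ℤ) ≤ J s := by exact_mod_cast hmax n hn
        omega

lemma coveringZ (Ce lam : ℝ≥0∞) (φ v : ℤ → ℝ≥0∞) (J₀ L : ℕ)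
    (hA1 : ∀ n : ℤ, ∀ N : ℕ, 1 ≤ N → ∀ m : ℤ, |m| ≤ (N : ℤ) →
      ∑ k ∈ Finset.Icc (-(N : ℤ)) (N : ℤ), v (n + k) ≤ Ce * (2 * N + 1) * v (n + m))
    (E : Finset ℤ) (hE : E ⊆ Finset.Icc (-(L : ℤ)) (L : ℤ))
    (hsel : ∀ n ∈ E, ∃ J : ℕ, 1 ≤ J ∧ J ≤ J₀ ∧
      lam * (2 * J + 1) < ∑ j ∈ Finset.Icc (n - J) (n + J), φ j) :
    lam * ∑ n ∈ E, v n ≤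
      3 * Ce * ∑ j ∈ Finset.Icc (-(L + J₀ : ℤ)) (L + J₀ : ℤ), φ j * v j := by
  classical
  set J : ℤ → ℕ := fun n => if h : n ∈ E then (hsel n h).choose else 1 with hJdef
  have hJ1 : ∀ n ∈ E, 1 ≤ J n := fun n h => by
    simp only [hJdef, dif_pos h]; exact (hsel n h).choose_spec.1
  have hJ0 : ∀ n ∈ E, J n ≤ J₀ := fun n h => by
    simp only [hJdef, dif_pos h]; exact (hsel n h).choose_spec.2.1
  have hJlt : ∀ n ∈ E, lam * (2 * J n + 1) < ∑ j ∈ Finset.Icc (n - J n) (n + J n), φ j := by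
    intro n h; simp only [hJdef, dif_pos h]; exact (hsel n h).choose_spec.2.2
  obtain ⟨S, hSE, hdisj, hcov⟩ := vitaliZ E J
  have h1 : ∑ n ∈ E, v n ≤ ∑ s ∈ S, ∑ n ∈ Finset.Icc (s - 3 * (J s : ℤ)) (s + 3 * J s), v n := by
    calc ∑ n ∈ E, v n
        ≤ ∑ n ∈ S.biUnion (fun s => Finset.Icc (s - 3 * (J s : ℤ)) (s + 3 * J s)), v n := by
          apply Finset.sum_le_sum_of_subset
          intro n hn
          obtain ⟨s, hs, hns⟩ := hcov n hn
          exact Finset.mem_biUnion.2 ⟨s, hs, hns⟩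
      _ ≤ ∑ s ∈ S, ∑ n ∈ Finset.Icc (s - 3 * (J s : ℤ)) (s + 3 * J s), v n :=
          sum_biUnion_le' _ _ _
  have h2 : ∀ s ∈ S, lam * ∑ n ∈ Finset.Icc (s - 3 * (J s : ℤ)) (s + 3 * J s), v n ≤
      3 * Ce * ∑ j ∈ Finset.Icc (s - J s) (s + J s), φ j * v j := by
    intro s hs
    have hsE' := hSE hs
    have hJs1 := hJ1 s hsE'
    have hne : (Finset.Icc (s - (J s : ℤ)) (s + J s)).Nonempty :=
      ⟨s, Finset.mem_Icc.2 (by omega)⟩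
    obtain ⟨j₀, hj₀mem, hj₀min⟩ := Finset.exists_min_image _ v hne
    have hA := hA1 s (3 * J s) (by omega) (j₀ - s) (by
      simp only [Finset.mem_Icc] at hj₀mem
      push_cast; rw [abs_le]; omega)
    have hsum : ∑ k ∈ Finset.Icc (-((3 * J s : ℕ) : ℤ)) ((3 * J s : ℕ) : ℤ), v (s + k)
        = ∑ n ∈ Finset.Icc (s - 3 * (J s : ℤ)) (s + 3 * J s), v n := by
      apply Finset.sum_nbij' (fun k => s + k) (fun n => n - s) <;>
        intros <;> simp_all only [Finset.mem_Icc] <;> push_cast at * <;> omega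
    have hj0 : s + (j₀ - s) = j₀ := by ring
    rw [hsum, hj0] at hA
    push_cast at hA
    have h63 : (2 * (3 * (J s : ℝ≥0∞)) + 1) ≤ 3 * (2 * (J s : ℝ≥0∞) + 1) := by
      have h3 : (3 : ℝ≥0∞) * (2 * (J s : ℝ≥0∞) + 1) = 2 * (3 * (J s : ℝ≥0∞)) + 3 := by ring
      rw [h3]; gcongr; norm_num
    calc lam * ∑ n ∈ Finset.Icc (s - 3 * (J s : ℤ)) (s + 3 * J s), v n
        ≤ lam * (Ce * (2 * (3 * (J s : ℝ≥0∞)) + 1) * v j₀) := by gcongr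
      _ ≤ lam * (Ce * (3 * (2 * (J s : ℝ≥0∞) + 1)) * v j₀) := by gcongr
      _ = 3 * Ce * (lam * (2 * (J s : ℝ≥0∞) + 1) * v j₀) := by ring
      _ ≤ 3 * Ce * ((∑ j ∈ Finset.Icc (s - (J s : ℤ)) (s + J s), φ j) * v j₀) := by
          gcongr
          exact (hJlt s hsE').le
      _ = 3 * Ce * (∑ j ∈ Finset.Icc (s - (J s : ℤ)) (s + J s), φ j * v j₀) := by
          rw [Finset.sum_mul]
      _ ≤ 3 * Ce * ∑ j ∈ Finset.Icc (s - (J s : ℤ)) (s + J s), φ j * v j := by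
          gcongr with j hj
          exact hj₀min j hj
  have h3 : ∑ s ∈ S, ∑ j ∈ Finset.Icc (s - (J s : ℤ)) (s + J s), φ j * v j ≤
      ∑ j ∈ Finset.Icc (-(L + J₀ : ℤ)) (L + J₀ : ℤ), φ j * v j := by
    rw [← Finset.sum_biUnion]
    · apply Finset.sum_le_sum_of_subset
      intro j hj
      obtain ⟨s, hs, hjs⟩ := Finset.mem_biUnion.1 hj
      have h4 := hE (hSE hs)
      have h5 := hJ0 s (hSE hs)
      simp only [Finset.mem_Icc] at *
      omega
    · intro a ha b hb hab
      exact hdisj a ha b hb hab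
  calc lam * ∑ n ∈ E, v n
      ≤ lam * ∑ s ∈ S, ∑ n ∈ Finset.Icc (s - 3 * (J s : ℤ)) (s + 3 * J s), v n := by gcongr
    _ = ∑ s ∈ S, lam * ∑ n ∈ Finset.Icc (s - 3 * (J s : ℤ)) (s + 3 * J s), v n := by
        rw [Finset.mul_sum]
    _ ≤ ∑ s ∈ S, 3 * Ce * ∑ j ∈ Finset.Icc (s - (J s : ℤ)) (s + J s), φ j * v j :=
        Finset.sum_le_sum h2
    _ = 3 * Ce * ∑ s ∈ S, ∑ j ∈ Finset.Icc (s - (J s : ℤ)) (s + J s), φ j * v j := by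
        rw [Finset.mul_sum]
    _ ≤ _ := mul_le_mul' le_rfl h3


section mp
variable {X : Type} [MeasurableSpace X] {μ : Measure X}

lemma mp_pow (V : Equiv.Perm X) (hV : MeasurePreserving (⇑V) μ μ) :
    ∀ k : ℕ, MeasurePreserving (⇑(V ^ k)) μ μ := by
  intro k
  induction k with
  | zero => simpa using MeasurePreserving.id μ
  | succ k ih =>
    have : ⇑(V ^ (k + 1)) = ⇑(V ^ k) ∘ ⇑V := by
      rw [pow_succ]; rfl
    rw [this]
    exact ih.comp hV

lemma mp_zpow (U : Equiv.Perm X) (hU : MeasurePreserving (⇑U) μ μ)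
    (hUs : MeasurePreserving (⇑U.symm) μ μ) :
    ∀ n : ℤ, MeasurePreserving (⇑(U ^ n)) μ μ := by
  intro n
  cases n with
  | ofNat k => rw [Int.ofNat_eq_coe, zpow_natCast]; exact mp_pow U hU k
  | negSucc k =>
    have h1 : ⇑(U ^ (Int.negSucc k)) = ⇑((U⁻¹) ^ (k + 1)) := by
      rw [zpow_negSucc, inv_pow]
    have h2 : ⇑(U⁻¹) = ⇑U.symm := rfl
    rw [h1]
    exact mp_pow U⁻¹ (h2 ▸ hUs) (k + 1)

/-- `U^n` as a measurable equivalence. -/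
noncomputable def permME (U : Equiv.Perm X) (hU : MeasurePreserving (⇑U) μ μ)
    (hUs : MeasurePreserving (⇑U.symm) μ μ) (n : ℤ) : X ≃ᵐ X where
  toEquiv := (U ^ n : Equiv.Perm X)
  measurable_toFun := (mp_zpow U hU hUs n).measurable
  measurable_invFun := by
    have : (U ^ n : Equiv.Perm X).symm = (U ^ (-n) : Equiv.Perm X) := by
      rw [zpow_neg]; rfl
    rw [this]
    exact (mp_zpow U hU hUs (-n)).measurable

lemma lint_comp_zpow (U : Equiv.Perm X) (hU : MeasurePreserving (⇑U) μ μ)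
    (hUs : MeasurePreserving (⇑U.symm) μ μ) (n : ℤ) (g : X → ℝ≥0∞) :
    ∫⁻ x, g ((U ^ n) x) ∂μ = ∫⁻ x, g x ∂μ := by
  conv_rhs => rw [← (mp_zpow U hU hUs n).map_eq]
  exact (MeasureTheory.lintegral_map_equiv g (permME U hU hUs n)).symm

end mp

/-- The maximal ergodic operator associated with an invertible transformation `U`. -/
noncomputable def MErg {X : Type*} (U : Equiv.Perm X) (f : X → ℝ) (x : X) : ℝ≥0∞ :=
  ⨆ (J : ℕ) (_ : 1 ≤ J),
    (∑ k ∈ Finset.Icc (-(J : ℤ)) (J : ℤ), ENNReal.ofReal |f ((U ^ (-k)) x)|) /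
      ((2 * J + 1 : ℕ) : ℝ≥0∞)

/-- The ergodic `A₁` condition with constant `C`. -/
def ErgodicA1 {X : Type*} [MeasurableSpace X] (μ : Measure X) (U : Equiv.Perm X)
    (w : X → ℝ) (C : ℝ) : Prop :=
  ∀ᵐ x ∂μ, ∀ N : ℕ, 1 ≤ N → ∀ m : ℤ, |m| ≤ (N : ℤ) →
    (∑ k ∈ Finset.Icc (-(N : ℤ)) (N : ℤ), w ((U ^ k) x)) / (2 * N + 1 : ℝ) ≤
      C * w ((U ^ m) x)

/-- for an ergodic `A₁` weight, the maximal ergodic operator satisfies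
the weighted weak (1,1) inequality, with constant depending only on the `A₁` constant. -/
theorem maximal_ergodic_weak_one_one (C : ℝ) :
    ∃ C' : ℝ≥0∞, C' ≠ ∞ ∧
      ∀ (X : Type) (mX : MeasurableSpace X) (μ : Measure X),
        IsProbabilityMeasure μ →
        ∀ U : Equiv.Perm X, MeasurePreserving U μ μ → MeasurePreserving U.symm μ μ →
        ∀ w : X → ℝ, (∀ x, 0 ≤ w x) → Integrable w μ → ErgodicA1 μ U w C →
        ∀ f : X → ℝ, Measurable f →
          (∫⁻ x, ENNReal.ofReal |f x| * ENNReal.ofReal (w x) ∂μ) ≠ ∞ →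
          ∀ lam : ℝ≥0∞, 0 < lam →
            (∫⁻ x in {x | lam < MErg U f x}, ENNReal.ofReal (w x) ∂μ) ≤
              C' / lam * ∫⁻ x, ENNReal.ofReal |f x| * ENNReal.ofReal (w x) ∂μ := by
  classical
  refine ⟨3 * ENNReal.ofReal (max C 1), by
    exact ENNReal.mul_ne_top (by norm_num) ENNReal.ofReal_ne_top, ?_⟩
  intro X mX μ hprob U hU hUs w hw0 hwInt hErg f hf hI lam hlam
  set I := ∫⁻ x, ENNReal.ofReal |f x| * ENNReal.ofReal (w x) ∂μ with hIdef
  by_cases hlamtop : lam = ∞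
  · subst hlamtop
    have hempty : {x : X | (⊤ : ℝ≥0∞) < MErg U f x} = ∅ := by
      ext x; simp
    simp [hempty]
  set Ce := ENNReal.ofReal (max C 1) with hCe
  have hCetop : Ce ≠ ∞ := ENNReal.ofReal_ne_top
  have hmp := mp_zpow U hU hUs
  have hcompx : ∀ (x : X) (b a : ℤ), (U ^ a) ((U ^ b) x) = (U ^ (b + a)) x := by
    intro x b a
    rw [add_comm, zpow_add]
    rfl
  set FS : ℕ → X → ℝ≥0∞ := fun J y =>
    ∑ k ∈ Finset.Icc (-(J : ℤ)) (J : ℤ), ENNReal.ofReal |f ((U ^ (-k)) y)| with hFSdef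
  have hFSmeas : ∀ J, Measurable (FS J) := fun J =>
    Finset.measurable_sum _ fun k _ =>
      ((hf.comp (hmp (-k)).measurable).abs).ennreal_ofReal
  set S : ℕ → Set X := fun J₀ =>
    {y | ∃ J : ℕ, 1 ≤ J ∧ J ≤ J₀ ∧ lam * ((2 * J + 1 : ℕ) : ℝ≥0∞) < FS J y} with hSdef
  have hSmeas : ∀ J₀, MeasurableSet (S J₀) := by
    intro J₀
    have hrw : S J₀ = ⋃ (J : ℕ) (_ : 1 ≤ J ∧ J ≤ J₀),
        {y | lam * ((2 * J + 1 : ℕ) : ℝ≥0∞) < FS J y} := by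
      ext y
      simp only [hSdef, Set.mem_setOf_eq, Set.mem_iUnion]
      tauto
    rw [hrw]
    exact MeasurableSet.iUnion fun J => MeasurableSet.iUnion fun _ =>
      measurableSet_lt measurable_const (hFSmeas J)
  have hSmono : Monotone S := by
    intro a b hab y hy
    obtain ⟨J, h1, h2, h3⟩ := hy
    exact ⟨J, h1, h2.trans hab, h3⟩
  have hMErgmeas : Measurable (MErg U f) := by
    have : MErg U f = fun x => ⨆ (J : ℕ) (_ : 1 ≤ J), FS J x / ((2 * J + 1 : ℕ) : ℝ≥0∞) := rfl
    rw [this]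
    exact Measurable.iSup fun J => Measurable.iSup fun _ => (hFSmeas J).div measurable_const
  have hsetmeas : MeasurableSet {x | lam < MErg U f x} :=
    measurableSet_lt measurable_const hMErgmeas
  have hcJ : ∀ J : ℕ, ((2 * J + 1 : ℕ) : ℝ≥0∞) ≠ 0 := fun J =>
    Nat.cast_ne_zero.mpr (by omega)
  have hcJtop : ∀ J : ℕ, ((2 * J + 1 : ℕ) : ℝ≥0∞) ≠ ∞ := fun J => ENNReal.natCast_ne_top _
  have hset : {x | lam < MErg U f x} = ⋃ J₀, S J₀ := by
    ext x
    simp only [Set.mem_setOf_eq, MErg, lt_iSup_iff, Set.mem_iUnion, hSdef]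
    constructor
    · rintro ⟨J, hJ, hlt⟩
      exact ⟨J, J, hJ, le_rfl,
        (ENNReal.lt_div_iff_mul_lt (Or.inl (hcJ J)) (Or.inl (hcJtop J))).1 hlt⟩
    · rintro ⟨J₀, J, h1, h2, h3⟩
      exact ⟨J, h1,
        (ENNReal.lt_div_iff_mul_lt (Or.inl (hcJ J)) (Or.inl (hcJtop J))).2 h3⟩
  set ν := μ.withDensity (fun x => ENNReal.ofReal (w x)) with hν
  have hνuniv : ν Set.univ ≠ ∞ := by
    rw [hν, withDensity_apply _ MeasurableSet.univ, Measure.restrict_univ]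
    have hb : (∫⁻ a, (‖w a‖₊ : ℝ≥0∞) ∂μ) < ∞ := hwInt.2
    refine ne_of_lt (lt_of_le_of_lt (lintegral_mono fun x => ?_) hb)
    rw [← Real.enorm_eq_ofReal (hw0 x)]
    exact le_rfl
  have hWfin : ∀ J₀, ν (S J₀) ≠ ∞ := fun J₀ =>
    ne_of_lt (lt_of_le_of_lt (measure_mono (Set.subset_univ _)) (lt_of_le_of_ne le_top hνuniv))
  have hGae : AEMeasurable (fun y => ENNReal.ofReal (w y)) μ :=
    (hwInt.1.aemeasurable).ennreal_ofReal
  -- ENNReal A1 at all translates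
  have hErg2 : ∀ᵐ x ∂μ, ∀ n : ℤ, ∀ N : ℕ, 1 ≤ N → ∀ m : ℤ, |m| ≤ (N : ℤ) →
      ∑ k ∈ Finset.Icc (-(N : ℤ)) (N : ℤ), ENNReal.ofReal (w ((U ^ (n + k)) x)) ≤
        Ce * (2 * N + 1) * ENNReal.ofReal (w ((U ^ (n + m)) x)) := by
    rw [ae_all_iff]
    intro n
    filter_upwards [(hmp n).quasiMeasurePreserving.ae hErg] with x hx N hN m hm
    have hx' := hx N hN m hm
    simp only [hcompx] at hx'
    have h2N : (0 : ℝ) < 2 * N + 1 := by positivity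
    rw [div_le_iff₀ h2N] at hx'
    have hreal : (∑ k ∈ Finset.Icc (-(N : ℤ)) (N : ℤ), w ((U ^ (n + k)) x)) ≤
        (max C 1) * (2 * N + 1) * w ((U ^ (n + m)) x) := by
      have hwm := hw0 ((U ^ (n + m)) x)
      nlinarith [hx', mul_nonneg (mul_nonneg (sub_nonneg.2 (le_max_left C 1)) hwm) h2N.le]
    calc ∑ k ∈ Finset.Icc (-(N : ℤ)) (N : ℤ), ENNReal.ofReal (w ((U ^ (n + k)) x))
        = ENNReal.ofReal (∑ k ∈ Finset.Icc (-(N : ℤ)) (N : ℤ), w ((U ^ (n + k)) x)) :=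
          (ENNReal.ofReal_sum_of_nonneg fun _ _ => hw0 _).symm
      _ ≤ ENNReal.ofReal ((max C 1) * (2 * N + 1) * w ((U ^ (n + m)) x)) :=
          ENNReal.ofReal_le_ofReal hreal
      _ = Ce * ENNReal.ofReal ((2 * N + 1 : ℝ)) * ENNReal.ofReal (w ((U ^ (n + m)) x)) := by
          rw [ENNReal.ofReal_mul (mul_nonneg (zero_le_one.trans (le_max_right C 1)) h2N.le),
            ENNReal.ofReal_mul (zero_le_one.trans (le_max_right C 1))]
      _ = Ce * (2 * N + 1) * ENNReal.ofReal (w ((U ^ (n + m)) x)) := by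
          congr 1
          congr 1
          rw [show (2 * (N : ℝ) + 1) = ((2 * N + 1 : ℕ) : ℝ) by push_cast; ring,
            ENNReal.ofReal_natCast]
          push_cast; ring
  -- the main per-J₀ bound
  have hkey : ∀ J₀ : ℕ, lam * ν (S J₀) ≤ 3 * Ce * I := by
    intro J₀
    set G : X → ℝ≥0∞ := (S J₀).indicator (fun y => ENNReal.ofReal (w y)) with hGdef
    have hGae' : AEMeasurable G μ := hGae.indicator (hSmeas J₀)
    set H : X → ℝ≥0∞ := fun y => ENNReal.ofReal |f y| * ENNReal.ofReal (w y) with hHdef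
    have hHae : AEMeasurable H μ := (hf.abs.ennreal_ofReal.aemeasurable).mul hGae
    have hptwise : ∀ᵐ x ∂μ, ∀ L : ℕ,
        lam * ∑ n ∈ Finset.Icc (-(L : ℤ)) (L : ℤ), G ((U ^ n) x) ≤
          3 * Ce * ∑ j ∈ Finset.Icc (-((L : ℤ) + J₀)) ((L : ℤ) + J₀), H ((U ^ j) x) := by
      filter_upwards [hErg2] with x hx L
      set φ : ℤ → ℝ≥0∞ := fun j => ENNReal.ofReal |f ((U ^ j) x)| with hφ
      set v : ℤ → ℝ≥0∞ := fun j => ENNReal.ofReal (w ((U ^ j) x)) with hv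
      have hcov := coveringZ Ce lam φ v J₀ L hx
        ((Finset.Icc (-(L : ℤ)) (L : ℤ)).filter (fun n => (U ^ n) x ∈ S J₀))
        (Finset.filter_subset _ _) ?_
      · have hlhs : ∑ n ∈ (Finset.Icc (-(L : ℤ)) (L : ℤ)).filter
            (fun n => (U ^ n) x ∈ S J₀), v n
            = ∑ n ∈ Finset.Icc (-(L : ℤ)) (L : ℤ), G ((U ^ n) x) := by
          rw [Finset.sum_filter]
          refine Finset.sum_congr rfl fun n _ => ?_
          rw [hGdef, Set.indicator_apply]
        rw [hlhs] at hcov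
        convert hcov using 3 <;> push_cast <;> ring
      · intro n hn
        obtain ⟨J, h1, h2, h3⟩ := (Finset.mem_filter.1 hn).2
        refine ⟨J, h1, h2, ?_⟩
        have hFSx : FS J ((U ^ n) x) = ∑ j ∈ Finset.Icc (n - (J : ℤ)) (n + J), φ j := by
          rw [hFSdef]
          simp only [hcompx]
          refine Finset.sum_nbij' (fun k => n - k) (fun j => n - j) ?_ ?_ ?_ ?_ ?_
          · intro k hk; simp only [Finset.mem_Icc] at *; omega
          · intro j hj; simp only [Finset.mem_Icc] at *; omega
          · intro k _; omega
          · intro j _; omega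
          · intro k _
            show _ = ENNReal.ofReal |f ((U ^ (n - k)) x)|
            rw [sub_eq_add_neg]
        rw [hFSx] at h3
        convert h3 using 2
        push_cast; ring
    -- integrate
    have hL : ∀ L : ℕ, lam * (((2 * L + 1 : ℕ) : ℝ≥0∞) * ν (S J₀)) ≤
        3 * Ce * (((2 * (L + J₀) + 1 : ℕ) : ℝ≥0∞) * I) := by
      intro L
      have hmono := lintegral_mono_ae ((hptwise.mono fun x hx => hx L))
      have hlhs : ∫⁻ x, lam * ∑ n ∈ Finset.Icc (-(L : ℤ)) (L : ℤ), G ((U ^ n) x) ∂μ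
          = lam * (((2 * L + 1 : ℕ) : ℝ≥0∞) * ν (S J₀)) := by
        rw [lintegral_const_mul' _ _ hlamtop]
        congr 1
        show (∫⁻ x, ∑ n ∈ Finset.Icc (-(L : ℤ)) (L : ℤ), (G ∘ ⇑(U ^ n)) x ∂μ) = _
        rw [lintegral_finset_sum' _ (fun n _ =>
          (hGae'.comp_quasiMeasurePreserving (hmp n).quasiMeasurePreserving))]
        have hterm : ∀ n : ℤ, ∫⁻ x, (G ∘ ⇑(U ^ n)) x ∂μ = ν (S J₀) := fun n => by
          show ∫⁻ x, G ((U ^ n) x) ∂μ = ν (S J₀)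
          rw [lint_comp_zpow U hU hUs n G, hGdef, lintegral_indicator (hSmeas J₀), hν,
            withDensity_apply _ (hSmeas J₀)]
        simp only [hterm, Finset.sum_const, nsmul_eq_mul, Int.card_Icc]
        congr 2
        omega
      have hrhs : ∫⁻ x, 3 * Ce * ∑ j ∈ Finset.Icc (-((L : ℤ) + J₀)) ((L : ℤ) + J₀),
          H ((U ^ j) x) ∂μ = 3 * Ce * (((2 * (L + J₀) + 1 : ℕ) : ℝ≥0∞) * I) := by
        rw [lintegral_const_mul' _ _ (ENNReal.mul_ne_top (by norm_num) hCetop)]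
        congr 1
        show (∫⁻ x, ∑ j ∈ Finset.Icc (-((L : ℤ) + J₀)) ((L : ℤ) + J₀), (H ∘ ⇑(U ^ j)) x ∂μ) = _
        rw [lintegral_finset_sum' _ (fun j _ =>
          (hHae.comp_quasiMeasurePreserving (hmp j).quasiMeasurePreserving))]
        have hterm : ∀ j : ℤ, ∫⁻ x, (H ∘ ⇑(U ^ j)) x ∂μ = I := fun j => by
          show ∫⁻ x, H ((U ^ j) x) ∂μ = I
          rw [lint_comp_zpow U hU hUs j H, hIdef]
        simp only [hterm, Finset.sum_const, nsmul_eq_mul, Int.card_Icc]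
        congr 2
        omega
      rw [← hlhs, ← hrhs]
      exact hmono
    -- limit in L
    have hfin1 : lam * ν (S J₀) ≠ ∞ := ENNReal.mul_ne_top hlamtop (hWfin J₀)
    have hfin2 : 3 * Ce * I ≠ ∞ := ENNReal.mul_ne_top (ENNReal.mul_ne_top (by norm_num) hCetop) hI
    rw [← ENNReal.toReal_le_toReal hfin1 hfin2]
    set a := (lam * ν (S J₀)).toReal with ha
    set K := (3 * Ce * I).toReal with hK
    by_contra hcon
    push_neg at hcon
    have haL : ∀ L : ℕ, a * (2 * L + 1) ≤ K * (2 * (L + J₀) + 1) := by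
      intro L
      have h1 := hL L
      have h2 : (lam * (((2 * L + 1 : ℕ) : ℝ≥0∞) * ν (S J₀))).toReal ≤
          (3 * Ce * (((2 * (L + J₀) + 1 : ℕ) : ℝ≥0∞) * I)).toReal := by
        apply ENNReal.toReal_mono _ h1
        exact ENNReal.mul_ne_top (ENNReal.mul_ne_top (by norm_num) hCetop)
          (ENNReal.mul_ne_top (ENNReal.natCast_ne_top _) hI)
      have h3 : a * ((2 * L + 1 : ℕ) : ℝ) ≤ K * ((2 * (L + J₀) + 1 : ℕ) : ℝ) := by
        rw [ha, hK]
        simp only [ENNReal.toReal_mul, ENNReal.toReal_natCast, ENNReal.toReal_ofNat] at h2 ⊢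
        push_cast at h2 ⊢
        ring_nf at h2 ⊢
        linarith [h2]
      push_cast at h3
      linarith
    have hKnn : (0 : ℝ) ≤ K := ENNReal.toReal_nonneg
    obtain ⟨L, hLgt⟩ := exists_nat_gt ((K * (2 * J₀)) / (a - K))
    have hden : (0 : ℝ) < a - K := by linarith
    have h4 : K * (2 * J₀) < (a - K) * L := by
      rw [div_lt_iff₀ hden] at hLgt
      linarith
    have h5 := haL L
    nlinarith [h5, h4, hden, Nat.cast_nonneg (α := ℝ) L]
  -- assemble
  have hLHS : ∫⁻ x in {x | lam < MErg U f x}, ENNReal.ofReal (w x) ∂μ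
      = ν {x | lam < MErg U f x} := (withDensity_apply _ hsetmeas).symm
  rw [hLHS, hset, Directed.measure_iUnion (hSmono.directed_le)]
  refine iSup_le fun J₀ => ?_
  have h6 : ν (S J₀) ≤ 3 * Ce * I / lam :=
    (ENNReal.le_div_iff_mul_le (Or.inl hlam.ne') (Or.inl hlamtop)).2
      (by rw [mul_comm]; exact hkey J₀)
  calc ν (S J₀) ≤ 3 * Ce * I / lam := h6
    _ = 3 * Ce / lam * I := by
        rw [div_eq_mul_inv, div_eq_mul_inv, mul_right_comm]
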